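/- In the linear setup, for any ε > 0 and δ ∈ (0, 1/4], suppose D ≥ 32·ln(6m/δ), D ≥ 1152·m·ln(6m/δ), and D ≥ 2304·m·ln(2/ε). Then for every γ ∈ [0,1], the generalization error of the algorithm with respect to the ramp loss L^(γ) satisfies ε_gen(m,δ) ≤ ε. -/

import Mathlib

open MeasureTheory ProbabilityTheory
open scoped ENNReal NNReal

noncomputable section

namespace LinearExample

/-- Euclidean dot product on `Fin n → ℝ`. -/
def dotp {n : ℕ} (v w : Fin n → ℝ) : ℝ := ∑ i, v i * w i

/-- An example: an input `(x₁, x₂) ∈ ℝ^K × ℝ^D` together with a real label. -/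
abbrev Ex (K D : ℕ) := ((Fin K → ℝ) × (Fin D → ℝ)) × ℝ

/-- The noise distribution: `D` i.i.d. coordinates, each `N(0, 32/D)`. -/
def noise (D : ℕ) : Measure (Fin D → ℝ) :=
  Measure.pi fun _ => gaussianReal 0 (32 / D)

/-- The data distribution `𝒟`: label `y` uniform on `{-1,1}`; given `y`,
`x₁ = 2·y·u` and `x₂ ~ N(0, (32/D)·I)`. -/
def μD (K D : ℕ) (u : Fin K → ℝ) : Measure (Ex K D) :=
  (1/2 : ℝ≥0∞) • (noise D).map (fun x₂ => (((2 : ℝ) • u, x₂), (1 : ℝ))) +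
  (1/2 : ℝ≥0∞) • (noise D).map (fun x₂ => (((-2 : ℝ) • u, x₂), (-1 : ℝ)))

/-- Distribution of an i.i.d. `m`-sample from `𝒟`. -/
def μS (K D m : ℕ) (u : Fin K → ℝ) : Measure (Fin m → Ex K D) :=
  Measure.pi fun _ => μD K D u

/-- The classifier learned on `S`: `h_S(x₁,x₂) = w₁·x₁ + w₂·x₂` with
`w₁ = 2m·u` and `w₂ = Σᵢ y⁽ⁱ⁾·x₂⁽ⁱ⁾`. -/
def alg (K D m : ℕ) (u : Fin K → ℝ) (S : Fin m → Ex K D) :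
    (Fin K → ℝ) × (Fin D → ℝ) → ℝ :=
  fun x => dotp ((2 * (m : ℝ)) • u) x.1 + dotp (∑ i, (S i).2 • (S i).1.2) x.2

/-- The ramp loss `L^{(γ)}`. -/
def ramp (γ y' y : ℝ) : ℝ :=
  if y * y' ≤ 0 then 1 else if γ ≤ y * y' then 0 else 1 - y * y' / γ

/-- Expected (test) loss of a hypothesis. -/
def testLoss (K D : ℕ) (u : Fin K → ℝ) (γ : ℝ)
    (h : (Fin K → ℝ) × (Fin D → ℝ) → ℝ) : ℝ :=
  ∫ z, ramp γ (h z.1) z.2 ∂(μD K D u)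

/-- Empirical loss of a hypothesis on a sample `S`. -/
def empLoss (K D m : ℕ) (γ : ℝ) (h : (Fin K → ℝ) × (Fin D → ℝ) → ℝ)
    (S : Fin m → Ex K D) : ℝ :=
  (1 / (m : ℝ)) * ∑ i, ramp γ (h (S i).1) (S i).2

/-- The generalization error `ε_gen(m,δ)` of the algorithm w.r.t. `L^{(γ)}`. -/
def genErr (K D m : ℕ) (u : Fin K → ℝ) (γ δ : ℝ) : ℝ :=
  sInf {ε : ℝ | 0 ≤ ε ∧
    ENNReal.ofReal (1 - δ) ≤
      μS K D m u {S | testLoss K D u γ (alg K D m u S)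
        - empLoss K D m γ (alg K D m u S) S ≤ ε}}

/-- The tightest algorithm-dependent uniform convergence bound `ε_unif-alg(m,δ)`
w.r.t. `L^{(γ)}`. -/
def unifAlg (K D m : ℕ) (u : Fin K → ℝ) (γ δ : ℝ) : ℝ :=
  sInf {ε : ℝ | 0 ≤ ε ∧
    ∃ 𝒮 : Set (Fin m → Ex K D), MeasurableSet 𝒮 ∧
      ENNReal.ofReal (1 - δ) ≤ μS K D m u 𝒮 ∧
      ∀ S ∈ 𝒮, ∀ S' ∈ 𝒮,
        |testLoss K D u γ (alg K D m u S') - empLoss K D m γ (alg K D m u S') S| ≤ ε}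

section Aux

open Real


lemma exp_quad_integrable (b c : ℝ) (hb : 0 < b) :
    Integrable (fun x : ℝ => Real.exp (-b*x^2 + c*x)) := by
  have h1 : Integrable (fun x : ℝ => Real.exp (c^2/(4*b)) * Real.exp (-b*(x - c/(2*b))^2)) :=
    (((integrable_exp_neg_mul_sq hb).comp_sub_right (c/(2*b))).const_mul _)
  refine h1.congr (Filter.Eventually.of_forall fun x => ?_)
  simp only [← Real.exp_add]
  congr 1
  field_simp
  ring

lemma exp_quad_integral (b c : ℝ) (hb : 0 < b) :
    ∫ x : ℝ, Real.exp (-b*x^2 + c*x) = Real.sqrt (π / b) * Real.exp (c^2/(4*b)) := by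
  have key : ∀ x : ℝ, Real.exp (-b*x^2 + c*x)
      = Real.exp (c^2/(4*b)) * Real.exp (-b*(x - c/(2*b))^2) := by
    intro x
    rw [← Real.exp_add]
    congr 1
    field_simp
    ring
  simp_rw [key]
  rw [MeasureTheory.integral_const_mul, integral_sub_right_eq_self (fun x => Real.exp (-b*x^2)) (c/(2*b)),
    integral_gaussian]
  ring

lemma lintegral_exp_mul_gaussian (v : ℝ≥0) (c : ℝ) :
    ∫⁻ x, ENNReal.ofReal (Real.exp (c * x)) ∂(gaussianReal 0 v)
      = ENNReal.ofReal (Real.exp ((v:ℝ) * c^2 / 2)) := by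
  by_cases hv : v = 0
  · simp only [hv, gaussianReal_zero_var, NNReal.coe_zero, zero_mul, zero_div, Real.exp_zero,
      ENNReal.ofReal_one]
    rw [lintegral_dirac]
    simp
  have hv' : (0:ℝ) < (v:ℝ) := NNReal.coe_pos.2 (lt_of_le_of_ne zero_le (Ne.symm hv))
  have hb : (0:ℝ) < (2*(v:ℝ))⁻¹ := by positivity
  have hmeas : Measurable fun x : ℝ => ENNReal.ofReal (Real.exp (c * x)) :=
    (measurable_exp.comp (measurable_const.mul measurable_id)).ennreal_ofReal
  rw [gaussianReal_of_var_ne_zero 0 hv,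
    lintegral_withDensity_eq_lintegral_mul volume (measurable_gaussianPDF 0 v) hmeas]
  have heq : ∀ x : ℝ, (gaussianPDF 0 v * fun x => ENNReal.ofReal (Real.exp (c * x))) x
      = ENNReal.ofReal ((Real.sqrt (2 * π * v))⁻¹ * Real.exp (-(2*(v:ℝ))⁻¹ * x^2 + c * x)) := by
    intro x
    simp only [Pi.mul_apply, gaussianPDF_def, gaussianPDFReal]
    rw [← ENNReal.ofReal_mul (by positivity)]
    congr 1
    rw [mul_assoc, ← Real.exp_add]
    congr 2
    field_simp
    ring
  simp_rw [heq]
  rw [← ofReal_integral_eq_lintegral_ofReal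
    ((exp_quad_integrable _ c hb).const_mul _)
    (Filter.Eventually.of_forall fun x => by positivity)]
  rw [MeasureTheory.integral_const_mul, exp_quad_integral _ c hb]
  congr 1
  have h2v : π / (2*(v:ℝ))⁻¹ = 2 * π * v := by field_simp
  rw [h2v]
  have hs : Real.sqrt (2*π*(v:ℝ)) ≠ 0 := by positivity
  rw [inv_mul_cancel_left₀ hs]
  congr 1
  have hvne : (v:ℝ) ≠ 0 := ne_of_gt hv'
  field_simp
  ring


lemma lintegral_exp_sq_quarter_gaussian :
    ∫⁻ x, ENNReal.ofReal (Real.exp (x^2/4)) ∂(gaussianReal 0 (1:ℝ≥0))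
      = ENNReal.ofReal (Real.sqrt 2) := by
  have hv : (1:ℝ≥0) ≠ 0 := one_ne_zero
  have hb : (0:ℝ) < (1/4 : ℝ) := by norm_num
  have hmeas : Measurable fun x : ℝ => ENNReal.ofReal (Real.exp (x^2/4)) :=
    (measurable_exp.comp ((measurable_id.pow_const 2).div_const 4)).ennreal_ofReal
  rw [gaussianReal_of_var_ne_zero 0 hv,
    lintegral_withDensity_eq_lintegral_mul volume (measurable_gaussianPDF 0 1) hmeas]
  have heq : ∀ x : ℝ, (gaussianPDF 0 1 * fun x => ENNReal.ofReal (Real.exp (x^2/4))) x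
      = ENNReal.ofReal ((Real.sqrt (2 * π))⁻¹ * Real.exp (-(1/4:ℝ) * x^2 + 0 * x)) := by
    intro x
    simp only [Pi.mul_apply, gaussianPDF_def, gaussianPDFReal]
    rw [← ENNReal.ofReal_mul (by positivity)]
    congr 1
    rw [mul_assoc, ← Real.exp_add, show ((1:ℝ≥0):ℝ) = 1 from rfl, mul_one]
    congr 2
    ring
  simp_rw [heq]
  rw [← ofReal_integral_eq_lintegral_ofReal
    ((exp_quad_integrable _ 0 hb).const_mul _)
    (Filter.Eventually.of_forall fun x => by positivity)]
  rw [MeasureTheory.integral_const_mul, exp_quad_integral _ 0 hb]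
  congr 1
  have h1 : π / (1/4 : ℝ) = 4 * π := by ring
  rw [h1, show (0:ℝ)^2/(4*(1/4)) = 0 by norm_num, Real.exp_zero, mul_one,
    show (4:ℝ)*π = 2*(2*π) by ring]
  have s2 : Real.sqrt 2 * Real.sqrt 2 = 2 := Real.mul_self_sqrt (by norm_num)
  rw [Real.sqrt_mul (by norm_num : (0:ℝ) ≤ 2) (2*π),
    Real.sqrt_mul (by norm_num : (0:ℝ) ≤ 2) π]
  rw [← mul_assoc ((Real.sqrt 2 * Real.sqrt π))⁻¹]
  have hπ : Real.sqrt π ≠ 0 := by positivity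
  have h2 : Real.sqrt 2 ≠ 0 := by positivity
  rw [mul_right_comm, inv_mul_cancel₀ (by positivity : Real.sqrt 2 * Real.sqrt π ≠ 0), one_mul]

lemma lintegral_pi_prod {n : ℕ} {E : Type*} [MeasurableSpace E] (μ : Measure E) [SigmaFinite μ]
    (f : Fin n → E → ℝ≥0∞) (hf : ∀ i, Measurable (f i)) :
    ∫⁻ x : Fin n → E, ∏ i, f i (x i) ∂(Measure.pi fun _ => μ) = ∏ i, ∫⁻ x, f i x ∂μ := by
  induction n with
  | zero => simp [lintegral_const, Measure.pi_univ]
  | succ n ih =>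
    have hg : Measurable fun x : Fin (n+1) → E => ∏ i, f i (x i) :=
      Finset.measurable_prod _ (fun i _ => (hf i).comp (measurable_pi_apply i))
    have hmp := (measurePreserving_piFinSuccAbove (fun _ : Fin (n+1) => μ) 0).symm
    rw [← hmp.lintegral_comp hg]
    have heq : ∀ p : E × (Fin n → E),
        (∏ i, f i (((MeasurableEquiv.piFinSuccAbove (fun _ : Fin (n+1) => E) 0).symm p) i))
          = f 0 p.1 * ∏ j : Fin n, f j.succ (p.2 j) := by
      intro p
      rw [Fin.prod_univ_succ]
      simp [MeasurableEquiv.piFinSuccAbove_symm_apply, Fin.insertNthEquiv,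
        Fin.insertNth_zero, Fin.zero_succAbove]
    simp_rw [heq]
    rw [lintegral_prod_mul (f := f 0) (g := fun y : Fin n → E => ∏ j : Fin n, f j.succ (y j))
      (hf 0).aemeasurable
      (Finset.measurable_prod _ (fun i _ => (hf i.succ).comp (measurable_pi_apply i))).aemeasurable]
    rw [ih (fun i => f i.succ) (fun i => hf i.succ), Fin.prod_univ_succ]

lemma lintegral_pi_pow {n : ℕ} {E : Type*} [MeasurableSpace E] (μ : Measure E) [SigmaFinite μ]
    (f : E → ℝ≥0∞) (hf : Measurable f) :
    ∫⁻ x : Fin n → E, ∏ i, f (x i) ∂(Measure.pi fun _ => μ) = (∫⁻ x, f x ∂μ)^n := by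
  rw [lintegral_pi_prod μ (fun _ => f) (fun _ => hf), Finset.prod_const, Finset.card_fin]


variable {K D m : ℕ} {u : Fin K → ℝ}

lemma measurable_dotp_const {n : ℕ} (w : Fin n → ℝ) :
    Measurable fun x : Fin n → ℝ => dotp w x :=
  Finset.measurable_sum _ (fun i _ => measurable_const.mul (measurable_pi_apply i))

lemma measurable_dotp_left {n : ℕ} (w : Fin n → ℝ) :
    Measurable fun x : Fin n → ℝ => dotp x w :=
  Finset.measurable_sum _ (fun i _ => (measurable_pi_apply i).mul_const _)

lemma dotp_comm {n : ℕ} (v w : Fin n → ℝ) : dotp v w = dotp w v := by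
  unfold dotp; exact Finset.sum_congr rfl fun i _ => mul_comm _ _

lemma dotp_neg_left {n : ℕ} (v w : Fin n → ℝ) : dotp (-v) w = -dotp v w := by
  unfold dotp
  rw [← Finset.sum_neg_distrib]
  exact Finset.sum_congr rfl fun i _ => by simp [neg_mul]

lemma dotp_smul_smul {n : ℕ} (a b : ℝ) (v : Fin n → ℝ) :
    dotp (a • v) (b • v) = a * b * ∑ i, v i ^ 2 := by
  unfold dotp
  rw [Finset.mul_sum]
  exact Finset.sum_congr rfl fun i _ => by simp [mul_pow, sq]; ring

instance noise_prob (D : ℕ) : IsProbabilityMeasure (noise D) := by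
  unfold noise; infer_instance

lemma measurable_mk1 : Measurable (fun x₂ : Fin D → ℝ => (((2 : ℝ) • u, x₂), (1 : ℝ))) :=
  (measurable_const.prodMk measurable_id).prodMk measurable_const

lemma measurable_mk2 : Measurable (fun x₂ : Fin D → ℝ => (((-2 : ℝ) • u, x₂), (-1 : ℝ))) :=
  (measurable_const.prodMk measurable_id).prodMk measurable_const

instance μD_prob (K D : ℕ) (u : Fin K → ℝ) : IsProbabilityMeasure (μD K D u) := by
  constructor
  unfold μD
  haveI h1 : IsProbabilityMeasure ((noise D).map (fun x₂ => (((2 : ℝ) • u, x₂), (1 : ℝ)))) :=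
    Measure.isProbabilityMeasure_map measurable_mk1.aemeasurable
  haveI h2 : IsProbabilityMeasure ((noise D).map (fun x₂ => (((-2 : ℝ) • u, x₂), (-1 : ℝ)))) :=
    Measure.isProbabilityMeasure_map measurable_mk2.aemeasurable
  rw [Measure.add_apply, Measure.smul_apply, Measure.smul_apply, measure_univ, measure_univ]
  simp only [smul_eq_mul, mul_one]
  rw [one_div, ENNReal.inv_two_add_inv_two]

instance μS_prob (K D m : ℕ) (u : Fin K → ℝ) : IsProbabilityMeasure (μS K D m u) := by
  unfold μS; infer_instance

lemma lintegral_μD (g : Ex K D → ℝ≥0∞) (hg : Measurable g) :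
    ∫⁻ z, g z ∂(μD K D u) =
      1/2 * ∫⁻ x, g (((2 : ℝ) • u, x), 1) ∂(noise D)
      + 1/2 * ∫⁻ x, g (((-2 : ℝ) • u, x), -1) ∂(noise D) := by
  unfold μD
  rw [lintegral_add_measure, lintegral_smul_measure, lintegral_smul_measure,
    lintegral_map hg measurable_mk1, lintegral_map hg measurable_mk2]
  simp only [smul_eq_mul]

lemma coe_vD (hD : D ≠ 0) : ((32 / (D : ℝ≥0) : ℝ≥0) : ℝ) = 32 / (D : ℝ) := by
  push_cast
  rfl

/-- MGF of a linear functional under the noise distribution. -/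
lemma lintegral_exp_dotp (hD : D ≠ 0) (w : Fin D → ℝ) (t : ℝ) :
    ∫⁻ x, ENNReal.ofReal (Real.exp (t * dotp w x)) ∂(noise D)
      = ENNReal.ofReal (Real.exp ((32/(D:ℝ)) * t^2 * (∑ j, (w j)^2) / 2)) := by
  unfold noise dotp
  have key : ∀ x : Fin D → ℝ, ENNReal.ofReal (Real.exp (t * ∑ j, w j * x j))
      = ∏ j, ENNReal.ofReal (Real.exp ((t * w j) * x j)) := by
    intro x
    rw [Finset.mul_sum]
    simp_rw [← mul_assoc]
    rw [Real.exp_sum, ENNReal.ofReal_prod_of_nonneg (fun i _ => (Real.exp_pos _).le)]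
  simp_rw [key]
  rw [lintegral_pi_prod _ (fun j x => ENNReal.ofReal (Real.exp ((t * w j) * x)))
    (fun j => (measurable_exp.comp (measurable_const.mul measurable_id)).ennreal_ofReal)]
  simp_rw [lintegral_exp_mul_gaussian, coe_vD hD]
  rw [← ENNReal.ofReal_prod_of_nonneg (fun i _ => (Real.exp_pos _).le), ← Real.exp_sum]
  congr 2
  rw [Finset.mul_sum, Finset.sum_div]
  exact Finset.sum_congr rfl fun j _ => by ring

/-- Gaussian tail bound via Chernoff. -/
lemma noise_tail (hD : D ≠ 0) (w : Fin D → ℝ) (hW : 0 < ∑ j, (w j)^2) :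
    noise D {x | 3 ≤ dotp w x}
      ≤ ENNReal.ofReal (Real.exp (-9 / (2 * (32/(D:ℝ)) * (∑ j, (w j)^2)))) := by
  set W := ∑ j, (w j)^2 with hWdef
  set v : ℝ := 32/(D:ℝ) with hvdef
  have hv : 0 < v := by
    have : (0:ℝ) < (D:ℝ) := Nat.cast_pos.2 (Nat.pos_of_ne_zero hD)
    positivity
  set t : ℝ := 3 / (v * W) with htdef
  have ht : 0 < t := by positivity
  have hsub : {x : Fin D → ℝ | 3 ≤ dotp w x}
      ⊆ {x | ENNReal.ofReal (Real.exp (3 * t)) ≤ ENNReal.ofReal (Real.exp (t * dotp w x))} := by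
    intro x hx
    have hx' : (3:ℝ) ≤ dotp w x := hx
    exact ENNReal.ofReal_le_ofReal (Real.exp_le_exp.2
      (by nlinarith [mul_le_mul_of_nonneg_left hx' ht.le]))
  have hchern := mul_meas_ge_le_lintegral₀
    (μ := noise D) (f := fun x => ENNReal.ofReal (Real.exp (t * dotp w x)))
    ((measurable_exp.comp (measurable_const.mul (measurable_dotp_const w))).ennreal_ofReal.aemeasurable)
    (ENNReal.ofReal (Real.exp (3 * t)))
  have hmono : noise D {x | 3 ≤ dotp w x}
      ≤ noise D {x | ENNReal.ofReal (Real.exp (3 * t)) ≤ ENNReal.ofReal (Real.exp (t * dotp w x))} :=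
    measure_mono hsub
  have hmgf := lintegral_exp_dotp hD w t
  have hkey : ENNReal.ofReal (Real.exp (3 * t)) * noise D {x | 3 ≤ dotp w x}
      ≤ ENNReal.ofReal (Real.exp (v * t^2 * W / 2)) := by
    calc ENNReal.ofReal (Real.exp (3 * t)) * noise D {x | 3 ≤ dotp w x}
        ≤ ENNReal.ofReal (Real.exp (3 * t)) * noise D
          {x | ENNReal.ofReal (Real.exp (3 * t)) ≤ ENNReal.ofReal (Real.exp (t * dotp w x))} :=
          mul_le_mul_right hmono _
      _ ≤ ∫⁻ x, ENNReal.ofReal (Real.exp (t * dotp w x)) ∂(noise D) := hchern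
      _ = ENNReal.ofReal (Real.exp (v * t^2 * W / 2)) := hmgf
  have hne : ENNReal.ofReal (Real.exp (3 * t)) ≠ 0 := by
    simp [ENNReal.ofReal_eq_zero, not_le, Real.exp_pos]
  have hnt : ENNReal.ofReal (Real.exp (3 * t)) ≠ ⊤ := ENNReal.ofReal_ne_top
  have hdiv : noise D {x | 3 ≤ dotp w x}
      ≤ ENNReal.ofReal (Real.exp (v * t^2 * W / 2)) / ENNReal.ofReal (Real.exp (3 * t)) := by
    rw [ENNReal.le_div_iff_mul_le (Or.inl hne) (Or.inl hnt), mul_comm]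
    exact hkey
  refine hdiv.trans (le_of_eq ?_)
  rw [← ENNReal.ofReal_div_of_pos (Real.exp_pos _), ← Real.exp_sub]
  congr 1
  have hvW : v * W ≠ 0 := by positivity
  rw [htdef]
  field_simp
  ring

/-- The learned weight vector `w₂`. -/
def wvec (S : Fin m → Ex K D) : Fin D → ℝ := ∑ i, (S i).2 • (S i).1.2

lemma wvec_apply (S : Fin m → Ex K D) (j : Fin D) :
    wvec S j = ∑ i, (S i).2 * (S i).1.2 j := by
  unfold wvec
  rw [Finset.sum_apply]
  exact Finset.sum_congr rfl fun i _ => rfl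

lemma measurable_wvec_j (j : Fin D) :
    Measurable fun S : Fin m → Ex K D => wvec S j := by
  simp_rw [wvec_apply]
  exact Finset.measurable_sum _ (fun i _ =>
    ((measurable_snd.comp (measurable_pi_apply i))).mul
      ((measurable_pi_apply j).comp (measurable_snd.comp (measurable_fst.comp (measurable_pi_apply i)))))

lemma measurable_Y :
    Measurable fun S : Fin m → Ex K D => ∑ j, (wvec S j)^2 :=
  Finset.measurable_sum _ (fun j _ => (measurable_wvec_j j).pow_const 2)

/-- Chernoff bound for the squared norm of the learned weights. -/
lemma chi_bound (hm : m ≠ 0) (hD : D ≠ 0) :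
    μS K D m u {S | (64:ℝ) * m ≤ ∑ j, (wvec S j)^2}
      ≤ ENNReal.ofReal (Real.exp (-(D:ℝ)/2) * Real.sqrt 2 ^ D) := by
  have hmR : (0:ℝ) < m := Nat.cast_pos.2 (Nat.pos_of_ne_zero hm)
  have hDR : (0:ℝ) < D := Nat.cast_pos.2 (Nat.pos_of_ne_zero hD)
  set s : ℝ := (D:ℝ)/(128*m) with hsdef
  have hs : 0 < s := by positivity
  set a : ℝ := Real.sqrt (2*s) with hadef
  have ha2 : a^2 = 2*s := Real.sq_sqrt (by positivity)
  set Γ : Measure (Fin D → ℝ) := Measure.pi (fun _ => gaussianReal 0 1) with hΓdef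
  -- Step A: Gaussian linearization of the square
  have stepA : ∀ c : Fin D → ℝ, ENNReal.ofReal (Real.exp (s * ∑ j, (c j)^2))
      = ∫⁻ G, ENNReal.ofReal (Real.exp (∑ j, a * c j * G j)) ∂Γ := by
    intro c
    have key : ∀ G : Fin D → ℝ, ENNReal.ofReal (Real.exp (∑ j, a * c j * G j))
        = ∏ j, ENNReal.ofReal (Real.exp ((a * c j) * G j)) := by
      intro G
      rw [Real.exp_sum, ENNReal.ofReal_prod_of_nonneg (fun i _ => (Real.exp_pos _).le)]
    simp_rw [key]
    rw [hΓdef, lintegral_pi_prod _ (fun j x => ENNReal.ofReal (Real.exp ((a * c j) * x)))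
      (fun j => (measurable_exp.comp (measurable_const.mul measurable_id)).ennreal_ofReal)]
    simp_rw [lintegral_exp_mul_gaussian]
    rw [← ENNReal.ofReal_prod_of_nonneg (fun i _ => (Real.exp_pos _).le), ← Real.exp_sum]
    congr 2
    rw [Finset.mul_sum]
    refine (Finset.sum_congr rfl fun j _ => ?_).symm
    rw [NNReal.coe_one, one_mul, mul_pow, ha2]
    ring
  -- measurability of the joint integrand
  have hjoint : Measurable fun p : (Fin m → Ex K D) × (Fin D → ℝ) =>
      ENNReal.ofReal (Real.exp (∑ j, a * wvec p.1 j * p.2 j)) := by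
    refine Measurable.ennreal_ofReal (measurable_exp.comp ?_)
    refine Finset.measurable_sum _ (fun j _ => ?_)
    exact ((measurable_const.mul ((measurable_wvec_j j).comp measurable_fst)).mul
      ((measurable_pi_apply j).comp measurable_snd))
  -- the main computation
  have hmain : ∫⁻ S, ENNReal.ofReal (Real.exp (s * ∑ j, (wvec S j)^2)) ∂(μS K D m u)
      = ENNReal.ofReal (Real.sqrt 2) ^ D := by
    rw [lintegral_congr (fun S => stepA (wvec S))]
    haveI : SigmaFinite Γ := by rw [hΓdef]; infer_instance
    rw [lintegral_lintegral_swap hjoint.aemeasurable]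
    -- rewrite the inner exponent as a sum over samples
    have hswap : ∀ (G : Fin D → ℝ) (S : Fin m → Ex K D),
        (∑ j, a * wvec S j * G j) = ∑ i, a * (S i).2 * dotp ((S i).1.2) G := by
      intro G S
      simp_rw [wvec_apply, Finset.mul_sum, Finset.sum_mul]
      rw [Finset.sum_comm]
      refine Finset.sum_congr rfl fun i _ => ?_
      unfold dotp
      rw [Finset.mul_sum]
      exact Finset.sum_congr rfl fun j _ => by ring
    have hinner : ∀ G : Fin D → ℝ,
        ∫⁻ S, ENNReal.ofReal (Real.exp (∑ j, a * wvec S j * G j)) ∂(μS K D m u)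
          = ENNReal.ofReal (Real.exp ((32/(D:ℝ)) * a^2 * (∑ j, (G j)^2) / 2)) ^ m := by
      intro G
      have hprod : ∀ S : Fin m → Ex K D,
          ENNReal.ofReal (Real.exp (∑ j, a * wvec S j * G j))
            = ∏ i, ENNReal.ofReal (Real.exp (a * (S i).2 * dotp ((S i).1.2) G)) := by
        intro S
        rw [hswap G S, Real.exp_sum,
          ENNReal.ofReal_prod_of_nonneg (fun i _ => (Real.exp_pos _).le)]
      simp_rw [hprod]
      have hgm : Measurable fun z : Ex K D =>
          ENNReal.ofReal (Real.exp (a * z.2 * dotp z.1.2 G)) := by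
        refine Measurable.ennreal_ofReal (measurable_exp.comp ?_)
        exact (measurable_const.mul measurable_snd).mul
          ((measurable_dotp_left G).comp (measurable_snd.comp measurable_fst))
      haveI : SigmaFinite (μD K D u) := inferInstance
      rw [show μS K D m u = Measure.pi (fun _ : Fin m => μD K D u) from rfl,
        lintegral_pi_pow _ _ hgm]
      congr 1
      rw [lintegral_μD _ hgm]
      have hb1 : ∀ x : Fin D → ℝ, a * (1:ℝ) * dotp x G = a * dotp G x := fun x => by
        rw [dotp_comm]; ring
      have hb2 : ∀ x : Fin D → ℝ, a * (-1:ℝ) * dotp x G = (-a) * dotp G x := fun x => by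
        rw [dotp_comm]; ring
      simp only []
      simp_rw [hb1, hb2]
      rw [lintegral_exp_dotp hD G a, lintegral_exp_dotp hD G (-a), neg_sq,
        ← add_mul, ENNReal.add_halves, one_mul]
    simp_rw [hinner]
    have hpt : ∀ G : Fin D → ℝ,
        ENNReal.ofReal (Real.exp ((32/(D:ℝ)) * a^2 * (∑ j, (G j)^2) / 2)) ^ m
          = ∏ j, ENNReal.ofReal (Real.exp ((G j)^2/4)) := by
      intro G
      rw [← ENNReal.ofReal_pow (Real.exp_pos _).le, ← Real.exp_nat_mul]
      have harith : (m:ℝ) * ((32/(D:ℝ)) * a^2 * (∑ j, (G j)^2) / 2) = ∑ j, (G j)^2/4 := by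
        rw [ha2, hsdef, ← Finset.sum_div]
        field_simp
        ring
      rw [harith, Real.exp_sum,
        ENNReal.ofReal_prod_of_nonneg (fun i _ => (Real.exp_pos _).le)]
    simp_rw [hpt]
    rw [hΓdef, lintegral_pi_pow _ (fun x => ENNReal.ofReal (Real.exp (x^2/4)))
      (measurable_exp.comp ((measurable_id.pow_const 2).div_const 4)).ennreal_ofReal,
      lintegral_exp_sq_quarter_gaussian]
  -- Chernoff step
  have hYm : Measurable fun S : Fin m → Ex K D =>
      ENNReal.ofReal (Real.exp (s * ∑ j, (wvec S j)^2)) :=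
    (measurable_exp.comp (measurable_const.mul measurable_Y)).ennreal_ofReal
  have hsubset : {S : Fin m → Ex K D | (64:ℝ) * m ≤ ∑ j, (wvec S j)^2}
      ⊆ {S | ENNReal.ofReal (Real.exp (s * (64 * (m:ℝ))))
          ≤ ENNReal.ofReal (Real.exp (s * ∑ j, (wvec S j)^2))} := by
    intro S hS
    have hS' : (64:ℝ) * m ≤ ∑ j, (wvec S j)^2 := hS
    exact ENNReal.ofReal_le_ofReal (Real.exp_le_exp.2 (mul_le_mul_of_nonneg_left hS' hs.le))
  have hchern := mul_meas_ge_le_lintegral₀ (μ := μS K D m u)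
    (f := fun S => ENNReal.ofReal (Real.exp (s * ∑ j, (wvec S j)^2)))
    hYm.aemeasurable (ENNReal.ofReal (Real.exp (s * (64 * (m:ℝ)))))
  have hkey : ENNReal.ofReal (Real.exp (s * (64 * (m:ℝ))))
      * μS K D m u {S | (64:ℝ) * m ≤ ∑ j, (wvec S j)^2}
      ≤ ENNReal.ofReal (Real.sqrt 2) ^ D := by
    calc _ ≤ ENNReal.ofReal (Real.exp (s * (64 * (m:ℝ))))
          * μS K D m u {S | ENNReal.ofReal (Real.exp (s * (64 * (m:ℝ))))
              ≤ ENNReal.ofReal (Real.exp (s * ∑ j, (wvec S j)^2))} :=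
        mul_le_mul_right (measure_mono hsubset) _
      _ ≤ ∫⁻ S, ENNReal.ofReal (Real.exp (s * ∑ j, (wvec S j)^2)) ∂(μS K D m u) := hchern
      _ = ENNReal.ofReal (Real.sqrt 2) ^ D := hmain
  have hne : ENNReal.ofReal (Real.exp (s * (64 * (m:ℝ)))) ≠ 0 := by
    simp [ENNReal.ofReal_eq_zero, not_le, Real.exp_pos]
  have hnt : ENNReal.ofReal (Real.exp (s * (64 * (m:ℝ)))) ≠ ⊤ := ENNReal.ofReal_ne_top
  have hdiv : μS K D m u {S | (64:ℝ) * m ≤ ∑ j, (wvec S j)^2}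
      ≤ ENNReal.ofReal (Real.sqrt 2) ^ D / ENNReal.ofReal (Real.exp (s * (64 * (m:ℝ)))) := by
    rw [ENNReal.le_div_iff_mul_le (Or.inl hne) (Or.inl hnt), mul_comm]
    exact hkey
  refine hdiv.trans (le_of_eq ?_)
  have hs64 : s * (64 * (m:ℝ)) = (D:ℝ)/2 := by
    rw [hsdef]
    field_simp
    ring
  rw [hs64, ← ENNReal.ofReal_pow (Real.sqrt_nonneg 2),
    ← ENNReal.ofReal_div_of_pos (Real.exp_pos _)]
  congr 1
  rw [div_eq_mul_inv, ← Real.exp_neg, mul_comm]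
  congr 2
  ring

lemma ramp_nonneg {γ y' y : ℝ} (hγ : 0 ≤ γ) : 0 ≤ ramp γ y' y := by
  unfold ramp
  split_ifs with h1 h2
  · norm_num
  · exact le_rfl
  · push_neg at h1 h2
    have hγ' : 0 < γ := lt_of_le_of_ne hγ (by rintro rfl; exact absurd h2 (by push_neg; linarith))
    have := (div_lt_one hγ').2 h2
    linarith

lemma ramp_le_one {γ y' y : ℝ} (hγ : 0 ≤ γ) : ramp γ y' y ≤ 1 := by
  unfold ramp
  split_ifs with h1 h2
  · exact le_rfl
  · norm_num
  · push_neg at h1 h2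
    have hγ' : 0 < γ := lt_of_le_of_ne hγ (by rintro rfl; exact absurd h2 (by push_neg; linarith))
    have : 0 ≤ y * y' / γ := div_nonneg h1.le hγ'.le
    linarith

lemma ramp_eq_zero {γ y' y : ℝ} (hγ0 : 0 ≤ γ) (h : γ < y * y') : ramp γ y' y = 0 := by
  unfold ramp
  rw [if_neg (by linarith), if_pos h.le]

lemma measurable_ramp_alg (γ : ℝ) (S : Fin m → Ex K D) :
    Measurable fun z : Ex K D => ramp γ (alg K D m u S z.1) z.2 := by
  have halg : Measurable fun z : Ex K D => alg K D m u S z.1 := by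
    unfold alg
    exact ((measurable_dotp_const _).comp (measurable_fst.comp measurable_fst)).add
      ((measurable_dotp_const _).comp (measurable_snd.comp measurable_fst))
  have hm : Measurable fun z : Ex K D => z.2 * alg K D m u S z.1 := measurable_snd.mul halg
  unfold ramp
  exact Measurable.ite (measurableSet_le hm measurable_const) measurable_const
    (Measurable.ite (measurableSet_le measurable_const hm) measurable_const
      (measurable_const.sub (hm.div_const γ)))

lemma integrable_ramp_alg {γ : ℝ} (hγ : 0 ≤ γ) (S : Fin m → Ex K D)
    (ν : Measure (Ex K D)) [IsFiniteMeasure ν] :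
    Integrable (fun z => ramp γ (alg K D m u S z.1) z.2) ν := by
  refine (integrable_const (1:ℝ)).mono' (measurable_ramp_alg γ S).aestronglyMeasurable
    (Filter.Eventually.of_forall fun z => ?_)
  rw [Real.norm_eq_abs, abs_le]
  exact ⟨by linarith [ramp_nonneg (y' := alg K D m u S z.1) (y := z.2) hγ],
    ramp_le_one hγ⟩

lemma testLoss_le_one {γ : ℝ} (hγ : 0 ≤ γ) (S : Fin m → Ex K D) :
    testLoss K D u γ (alg K D m u S) ≤ 1 := by
  unfold testLoss
  haveI := μD_prob K D u
  calc ∫ z, ramp γ (alg K D m u S z.1) z.2 ∂(μD K D u)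
      ≤ ∫ _, (1:ℝ) ∂(μD K D u) :=
        integral_mono_of_nonneg (Filter.Eventually.of_forall fun z => ramp_nonneg hγ)
          (integrable_const 1) (Filter.Eventually.of_forall fun z => ramp_le_one hγ)
    _ = 1 := by simp

lemma empLoss_nonneg {γ : ℝ} (hγ : 0 ≤ γ) (h : (Fin K → ℝ) × (Fin D → ℝ) → ℝ)
    (S : Fin m → Ex K D) : 0 ≤ empLoss K D m γ h S := by
  unfold empLoss
  exact mul_nonneg (by positivity)
    (Finset.sum_nonneg fun i _ => ramp_nonneg hγ)

lemma testLoss_le_tail {γ : ℝ} (hsum : ∑ i, u i ^ 2 = 1/(m:ℝ)) (hm : m ≠ 0)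
    (hγ0 : 0 ≤ γ) (hγ1 : γ ≤ 1) (S : Fin m → Ex K D) :
    testLoss K D u γ (alg K D m u S)
      ≤ ((noise D) {x | 3 ≤ dotp (-(wvec S)) x}).toReal / 2
        + ((noise D) {x | 3 ≤ dotp (wvec S) x}).toReal / 2 := by
  have hmR : (0:ℝ) < m := Nat.cast_pos.2 (Nat.pos_of_ne_zero hm)
  set w : Fin D → ℝ := wvec S with hwdef
  set f : Ex K D → ℝ := fun z => ramp γ (alg K D m u S z.1) z.2 with hfdef
  haveI hp1 : IsProbabilityMeasure ((noise D).map
      (fun x₂ : Fin D → ℝ => (((2 : ℝ) • u, x₂), (1 : ℝ)))) :=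
    Measure.isProbabilityMeasure_map measurable_mk1.aemeasurable
  haveI hp2 : IsProbabilityMeasure ((noise D).map
      (fun x₂ : Fin D → ℝ => (((-2 : ℝ) • u, x₂), (-1 : ℝ)))) :=
    Measure.isProbabilityMeasure_map measurable_mk2.aemeasurable
  have hI1 : Integrable f ((noise D).map
      (fun x₂ : Fin D → ℝ => (((2 : ℝ) • u, x₂), (1 : ℝ)))) := integrable_ramp_alg hγ0 S _
  have hI2 : Integrable f ((noise D).map
      (fun x₂ : Fin D → ℝ => (((-2 : ℝ) • u, x₂), (-1 : ℝ)))) := integrable_ramp_alg hγ0 S _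
  have hsplit : testLoss K D u γ (alg K D m u S)
      = (1/2 : ℝ) * ∫ x, f (((2 : ℝ) • u, x), 1) ∂(noise D)
        + (1/2 : ℝ) * ∫ x, f (((-2 : ℝ) • u, x), -1) ∂(noise D) := by
    show ∫ z, f z ∂(μD K D u) = _
    unfold μD
    rw [integral_add_measure (hI1.smul_measure (by norm_num)) (hI2.smul_measure (by norm_num)),
      integral_smul_measure, integral_smul_measure,
      integral_map measurable_mk1.aemeasurable (measurable_ramp_alg γ S).aestronglyMeasurable,
      integral_map measurable_mk2.aemeasurable (measurable_ramp_alg γ S).aestronglyMeasurable]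
    norm_num [ENNReal.toReal_div]
    rfl
  -- margin identities
  have hmargin1 : ∀ x : Fin D → ℝ, alg K D m u S ((2 : ℝ) • u, x) = 4 + dotp w x := by
    intro x
    show dotp ((2 * (m:ℝ)) • u) ((2:ℝ) • u) + dotp w x = 4 + dotp w x
    rw [dotp_smul_smul, hsum]
    field_simp
    ring
  have hmargin2 : ∀ x : Fin D → ℝ, alg K D m u S ((-2 : ℝ) • u, x) = -4 + dotp w x := by
    intro x
    show dotp ((2 * (m:ℝ)) • u) ((-2:ℝ) • u) + dotp w x = -4 + dotp w x
    rw [dotp_smul_smul, hsum]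
    field_simp
    ring
  have hA1 : MeasurableSet {x : Fin D → ℝ | 3 ≤ dotp (-w) x} :=
    measurableSet_le measurable_const (measurable_dotp_const _)
  have hA2 : MeasurableSet {x : Fin D → ℝ | 3 ≤ dotp w x} :=
    measurableSet_le measurable_const (measurable_dotp_const _)
  have hmeas1 : Measurable fun x : Fin D → ℝ => f (((2 : ℝ) • u, x), 1) :=
    (measurable_ramp_alg γ S).comp measurable_mk1
  have hmeas2 : Measurable fun x : Fin D → ℝ => f (((-2 : ℝ) • u, x), -1) :=
    (measurable_ramp_alg γ S).comp measurable_mk2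
  have h1 : ∫ x, f (((2 : ℝ) • u, x), 1) ∂(noise D)
      ≤ ((noise D) {x | 3 ≤ dotp (-w) x}).toReal := by
    have hpt : ∀ x : Fin D → ℝ, f (((2 : ℝ) • u, x), 1)
        ≤ Set.indicator {x : Fin D → ℝ | 3 ≤ dotp (-w) x} (fun _ => (1:ℝ)) x := by
      intro x
      show ramp γ (alg K D m u S ((2 : ℝ) • u, x)) 1 ≤ _
      rw [hmargin1 x]
      rcases le_or_gt 3 (dotp (-w) x) with hc | hc
      · rw [Set.indicator_of_mem (show x ∈ {x : Fin D → ℝ | 3 ≤ dotp (-w) x} from hc)]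
        exact ramp_le_one hγ0
      · rw [Set.indicator_of_notMem (by simpa using hc.not_ge)]
        rw [dotp_neg_left] at hc
        refine le_of_eq (ramp_eq_zero hγ0 ?_)
        rw [one_mul]
        linarith
    calc ∫ x, f (((2 : ℝ) • u, x), 1) ∂(noise D)
        ≤ ∫ x, Set.indicator {x : Fin D → ℝ | 3 ≤ dotp (-w) x} (fun _ => (1:ℝ)) x ∂(noise D) :=
          integral_mono_of_nonneg
            (Filter.Eventually.of_forall fun x => ramp_nonneg hγ0)
            ((integrable_const 1).indicator hA1)
            (Filter.Eventually.of_forall hpt)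
      _ = ((noise D) {x | 3 ≤ dotp (-w) x}).toReal := by
          rw [integral_indicator_const (1:ℝ) hA1, smul_eq_mul, mul_one]
          rfl
  have h2 : ∫ x, f (((-2 : ℝ) • u, x), -1) ∂(noise D)
      ≤ ((noise D) {x | 3 ≤ dotp w x}).toReal := by
    have hpt : ∀ x : Fin D → ℝ, f (((-2 : ℝ) • u, x), -1)
        ≤ Set.indicator {x : Fin D → ℝ | 3 ≤ dotp w x} (fun _ => (1:ℝ)) x := by
      intro x
      show ramp γ (alg K D m u S ((-2 : ℝ) • u, x)) (-1) ≤ _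
      rw [hmargin2 x]
      rcases le_or_gt 3 (dotp w x) with hc | hc
      · rw [Set.indicator_of_mem (show x ∈ {x : Fin D → ℝ | 3 ≤ dotp w x} from hc)]
        exact ramp_le_one hγ0
      · rw [Set.indicator_of_notMem (by simpa using hc.not_ge)]
        refine le_of_eq (ramp_eq_zero hγ0 ?_)
        rw [neg_one_mul, neg_add, neg_neg]
        linarith
    calc ∫ x, f (((-2 : ℝ) • u, x), -1) ∂(noise D)
        ≤ ∫ x, Set.indicator {x : Fin D → ℝ | 3 ≤ dotp w x} (fun _ => (1:ℝ)) x ∂(noise D) :=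
          integral_mono_of_nonneg
            (Filter.Eventually.of_forall fun x => ramp_nonneg hγ0)
            ((integrable_const 1).indicator hA2)
            (Filter.Eventually.of_forall hpt)
      _ = ((noise D) {x | 3 ≤ dotp w x}).toReal := by
          rw [integral_indicator_const (1:ℝ) hA2, smul_eq_mul, mul_one]
          rfl
  rw [hsplit]
  linarith

lemma tail_small {ε : ℝ} (hD : D ≠ 0) (hm : m ≠ 0) (hε : 0 < ε) (hε2 : ε < 2)
    (hD3 : 2304 * m * Real.log (2 / ε) ≤ (D : ℝ)) (w : Fin D → ℝ)
    (hW : ∑ j, (w j)^2 ≤ 64 * (m:ℝ)) :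
    ((noise D) {x | 3 ≤ dotp w x}).toReal ≤ ε / 2 := by
  have hmR : (0:ℝ) < m := Nat.cast_pos.2 (Nat.pos_of_ne_zero hm)
  have hDR : (0:ℝ) < D := Nat.cast_pos.2 (Nat.pos_of_ne_zero hD)
  by_cases hW0 : ∑ j, (w j)^2 = 0
  · have hwz : ∀ j, w j = 0 := by
      intro j
      have := (Finset.sum_eq_zero_iff_of_nonneg (fun i _ => sq_nonneg (w i))).1 hW0 j
        (Finset.mem_univ j)
      exact pow_eq_zero_iff (n := 2) (by norm_num) |>.1 this
    have hempty : {x : Fin D → ℝ | 3 ≤ dotp w x} = ∅ := by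
      ext x
      simp only [Set.mem_setOf_eq, Set.mem_empty_iff_false, iff_false, not_le]
      have : dotp w x = 0 := by
        unfold dotp
        exact Finset.sum_eq_zero fun i _ => by rw [hwz i, zero_mul]
      rw [this]
      norm_num
    rw [hempty]
    simp
    positivity
  · have hWpos : 0 < ∑ j, (w j)^2 :=
      lt_of_le_of_ne (Finset.sum_nonneg fun i _ => sq_nonneg _) (Ne.symm hW0)
    set W := ∑ j, (w j)^2 with hWdef
    have htail := noise_tail hD w hWpos
    have hL0 : 0 < Real.log (2/ε) := Real.log_pos (by rw [lt_div_iff₀ hε]; linarith)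
    have hexp : Real.exp (-9 / (2 * (32/(D:ℝ)) * W)) ≤ ε / 2 := by
      have hvW : 0 < 2 * (32/(D:ℝ)) * W := by positivity
      have hstep1 : 2 * (32/(D:ℝ)) * W ≤ 4096 * m / D := by
        rw [show (4096:ℝ) * m / D = 2 * (32/(D:ℝ)) * (64 * m) by field_simp; ring]
        gcongr
      have hstep2 : Real.log (2/ε) ≤ 9 / (2 * (32/(D:ℝ)) * W) := by
        have h9 : 9 / (4096 * (m:ℝ) / D) ≤ 9 / (2 * (32/(D:ℝ)) * W) :=
          div_le_div_of_nonneg_left (by norm_num) hvW hstep1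
        refine le_trans ?_ h9
        rw [show (9:ℝ) / (4096 * m / D) = 9 * D / (4096 * m) by field_simp]
        rw [le_div_iff₀ (by positivity)]
        nlinarith [hD3, hL0.le]
      calc Real.exp (-9 / (2 * (32/(D:ℝ)) * W))
          ≤ Real.exp (-Real.log (2/ε)) := by
            apply Real.exp_le_exp.2
            rw [neg_div]
            linarith
        _ = ε / 2 := by
            rw [Real.exp_neg, Real.exp_log (by positivity), inv_div]
    exact ENNReal.toReal_le_of_le_ofReal (by positivity)
      (htail.trans (ENNReal.ofReal_le_ofReal hexp))

lemma chi_delta {δ : ℝ} (hm : 1 ≤ m) (hδ0 : 0 < δ) (hδ1 : δ ≤ 1/4)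
    (hD1 : 32 * Real.log (6 * m / δ) ≤ (D : ℝ)) :
    Real.exp (-(D:ℝ)/2) * Real.sqrt 2 ^ D ≤ δ := by
  have hmR : (1:ℝ) ≤ m := by exact_mod_cast hm
  have h1 : Real.sqrt 2 ^ D = Real.exp ((D:ℝ) * (Real.log 2 / 2)) := by
    rw [← Real.log_sqrt (by norm_num : (0:ℝ) ≤ 2), Real.exp_nat_mul,
      Real.exp_log (Real.sqrt_pos.2 (by norm_num))]
  rw [h1, ← Real.exp_add]
  have hlog2 : Real.log 2 ≤ 3/4 :=
    le_of_lt (lt_of_lt_of_le Real.log_two_lt_d9 (by norm_num))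
  have hDnn : (0:ℝ) ≤ D := Nat.cast_nonneg D
  have hlogδ : Real.log (1/δ) ≤ Real.log (6 * m / δ) :=
    Real.log_le_log (by positivity) (by gcongr; linarith)
  have hl4 : Real.log 4 ≤ Real.log (1/δ) :=
    Real.log_le_log (by norm_num) ((le_div_iff₀ hδ0).2 (by linarith))
  have hl40 : (0:ℝ) < Real.log 4 := Real.log_pos (by norm_num)
  have h8 : 8 * Real.log (1/δ) ≤ (D:ℝ) := by linarith
  have hld : Real.log (1/δ) = -Real.log δ := by rw [one_div, Real.log_inv]
  rw [show δ = Real.exp (Real.log δ) from (Real.exp_log hδ0).symm]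
  apply Real.exp_le_exp.2
  nlinarith [hDnn, hlog2]

end Aux

/-- in the linear setup, for suitable `D`, for every `γ ∈ [0,1]`
the generalization error w.r.t. the ramp loss `L^{(γ)}` satisfies `ε_gen(m,δ) ≤ ε`. -/
theorem generalization_error_small
    (K D m : ℕ) (hm : 1 ≤ m) (u : Fin K → ℝ)
    (hu : Real.sqrt (∑ i, u i ^ 2) = 1 / Real.sqrt m)
    (ε δ : ℝ) (hε : 0 < ε) (hδ0 : 0 < δ) (hδ1 : δ ≤ 1 / 4)
    (hD1 : 32 * Real.log (6 * m / δ) ≤ (D : ℝ))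
    (hD2 : 1152 * m * Real.log (6 * m / δ) ≤ (D : ℝ))
    (hD3 : 2304 * m * Real.log (2 / ε) ≤ (D : ℝ)) :
    ∀ γ ∈ Set.Icc (0 : ℝ) 1, genErr K D m u γ δ ≤ ε := by
  intro γ hγ
  obtain ⟨hγ0, hγ1⟩ := hγ
  have hmne : m ≠ 0 := Nat.one_le_iff_ne_zero.1 hm
  have hmR : (0:ℝ) < m := Nat.cast_pos.2 (Nat.pos_of_ne_zero hmne)
  have hmR1 : (1:ℝ) ≤ m := by exact_mod_cast hm
  have hlog24 : (0:ℝ) < Real.log (6 * m / δ) := Real.log_pos (by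
    rw [lt_div_iff₀ hδ0]
    nlinarith)
  have hDR : (0:ℝ) < D := lt_of_lt_of_le (by positivity) hD1
  have hDne : D ≠ 0 := by
    intro h
    rw [h] at hDR
    norm_num at hDR
  have hsum : ∑ i, u i ^ 2 = 1/(m:ℝ) := by
    have h0 : (0:ℝ) ≤ ∑ i, u i ^ 2 := Finset.sum_nonneg fun i _ => sq_nonneg _
    have h2 := congrArg (fun x : ℝ => x^2) hu
    simp only [div_pow, one_pow] at h2
    rw [Real.sq_sqrt h0, Real.sq_sqrt (Nat.cast_nonneg m)] at h2
    exact h2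
  haveI := μS_prob K D m u
  refine csInf_le ⟨0, fun x hx => hx.1⟩ ⟨hε.le, ?_⟩
  by_cases hε2 : ε < 2
  · -- main case: use the concentration event
    set B : Set (Fin m → Ex K D) := {S | ∑ j, (wvec S j)^2 ≤ 64 * (m:ℝ)} with hBdef
    have hBmeas : MeasurableSet B := measurableSet_le measurable_Y measurable_const
    have hBsub : B ⊆ {S | testLoss K D u γ (alg K D m u S)
        - empLoss K D m γ (alg K D m u S) S ≤ ε} := by
      intro S hS
      have hw1 : ∑ j, ((wvec S) j)^2 ≤ 64 * (m:ℝ) := hS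
      have hw2 : ∑ j, ((-(wvec S)) j)^2 ≤ 64 * (m:ℝ) := by
        calc ∑ j, ((-(wvec S)) j)^2 = ∑ j, ((wvec S) j)^2 := by
              refine Finset.sum_congr rfl fun j _ => ?_
              rw [Pi.neg_apply, neg_sq]
          _ ≤ 64 * (m:ℝ) := hw1
      have ht := testLoss_le_tail hsum hmne hγ0 hγ1 S
      have t1 := tail_small hDne hmne hε hε2 hD3 (wvec S) hw1
      have t2 := tail_small hDne hmne hε hε2 hD3 (-(wvec S)) hw2
      have hemp := empLoss_nonneg (K := K) (D := D) (m := m) hγ0 (alg K D m u S) S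
      show testLoss K D u γ (alg K D m u S) - empLoss K D m γ (alg K D m u S) S ≤ ε
      linarith
    have hcompl : μS K D m u Bᶜ ≤ ENNReal.ofReal δ := by
      have hsub : Bᶜ ⊆ {S : Fin m → Ex K D | (64:ℝ) * m ≤ ∑ j, (wvec S j)^2} := by
        intro S hS
        have hS' : ¬ (∑ j, (wvec S j)^2 ≤ 64 * (m:ℝ)) := hS
        exact (not_le.1 hS').le
      calc μS K D m u Bᶜ ≤ μS K D m u {S | (64:ℝ) * m ≤ ∑ j, (wvec S j)^2} :=
            measure_mono hsub
        _ ≤ ENNReal.ofReal (Real.exp (-(D:ℝ)/2) * Real.sqrt 2 ^ D) := chi_bound hmne hDne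
        _ ≤ ENNReal.ofReal δ := ENNReal.ofReal_le_ofReal (chi_delta hm hδ0 hδ1 hD1)
    calc ENNReal.ofReal (1 - δ) = 1 - ENNReal.ofReal δ := by
          rw [← ENNReal.ofReal_one, ← ENNReal.ofReal_sub _ hδ0.le]
      _ ≤ 1 - μS K D m u Bᶜ := tsub_le_tsub_left hcompl 1
      _ = μS K D m u B := by
          rw [prob_compl_eq_one_sub hBmeas, ENNReal.sub_sub_cancel ENNReal.one_ne_top
            prob_le_one]
      _ ≤ μS K D m u {S | testLoss K D u γ (alg K D m u S)
            - empLoss K D m γ (alg K D m u S) S ≤ ε} := measure_mono hBsub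
  · -- easy case: ε ≥ 2, the inequality holds everywhere
    push_neg at hε2
    have huniv : {S : Fin m → Ex K D | testLoss K D u γ (alg K D m u S)
        - empLoss K D m γ (alg K D m u S) S ≤ ε} = Set.univ := by
      refine Set.eq_univ_of_forall fun S => ?_
      have h1 := testLoss_le_one (K := K) (D := D) (u := u) hγ0 S
      have h2 := empLoss_nonneg (K := K) (D := D) (m := m) hγ0 (alg K D m u S) S
      show testLoss K D u γ (alg K D m u S) - empLoss K D m γ (alg K D m u S) S ≤ ε
      linarith
    rw [huniv, measure_univ]
    exact ENNReal.ofReal_le_one.2 (by linarith)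


end LinearExample
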